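/- Let Σ be a linearly ordered alphabet and let ws = w_0, …, w_{n−1} be a list of lists over Σ sorted with respect to ≤lex. Then for all indices i < j < n, lcp(w_i, w_j) = min over i ≤ t < j of lcp(w_t, w_{t+1}). (Applied to reversed strings, this says that the longest common suffix of any two K-mers in the right-to-left lexicographic order equals the minimum of the LCS array over the positions between them.) -/

import Mathlib

/-- The (non-strict) lexicographic order on lists over a linearly ordered alphabet:
`x ≤lex y` iff `x = y` or `x` precedes `y` in the lexicographic order. -/
def lexLE {α : Type*} [LinearOrder α] (x y : List α) : Prop :=
  x = y ∨ List.Lex (· < ·) x y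

/-- `lcp x y` is the length of the longest common prefix of `x` and `y`. -/
def lcp {α : Type*} [DecidableEq α] : List α → List α → ℕ
  | a :: x, b :: y => if a = b then lcp x y + 1 else 0
  | _, _ => 0

lemma lexLE_head {α : Type*} [LinearOrder α] {a b : α} {x y : List α}
    (h : lexLE (a :: x) (b :: y)) : a ≤ b := by
  rcases h with h | h
  · simp_all
  · cases h with
    | cons _ => exact le_refl _
    | rel h => exact le_of_lt h

lemma lexLE_tail {α : Type*} [LinearOrder α] {a b : α} {x y : List α}
    (h : lexLE (a :: x) (b :: y)) (hab : a = b) : lexLE x y := by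
  rcases h with h | h
  · injection h with _ h2; exact Or.inl h2
  · cases h with
    | cons h => exact Or.inr h
    | rel h => exact absurd hab (ne_of_lt h)

lemma inf'_congr_set {β : Type*} [SemilatticeInf β] (s t : Finset ℕ) (hs : s.Nonempty)
    (h : s = t) (f : ℕ → β) : s.inf' hs f = t.inf' (h ▸ hs) f := by subst h; rfl

lemma lcp_min_three {α : Type*} [LinearOrder α] :
    ∀ x y z : List α, lexLE x y → lexLE y z →
      lcp x z = min (lcp x y) (lcp y z) := by
  intro x
  induction x with
  | nil => intro y z _ _; cases y <;> cases z <;> simp [lcp]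
  | cons a x ih =>
    intro y z hxy hyz
    cases y with
    | nil =>
      rcases hxy with h | h
      · exact absurd h (by simp)
      · cases h
    | cons b y =>
      cases z with
      | nil =>
        rcases hyz with h | h
        · exact absurd h (by simp)
        · cases h
      | cons c z =>
        have hab := lexLE_head hxy
        have hbc := lexLE_head hyz
        by_cases hac : a = c
        · have h1 : a = b := le_antisymm hab (hac ▸ hbc)
          have h2 : b = c := h1 ▸ hac
          simp only [lcp, if_pos hac, if_pos h1, if_pos h2]
          rw [ih y z (lexLE_tail hxy h1) (lexLE_tail hyz h2)]
          omega
        · simp only [lcp, if_neg hac]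
          by_cases h1 : a = b
          · have h2 : b ≠ c := fun h => hac (h1.trans h)
            simp [if_neg h2]
          · simp [if_neg h1]

/-- In a lexicographically sorted list of strings `w 0, …, w (n-1)`, the longest common
prefix of `w i` and `w j` (for `i < j < n`) equals the minimum of the consecutive
values `lcp (w t) (w (t+1))` over `i ≤ t < j`.  (Applied to reversed strings, the
longest common suffix of any two `K`-mers equals the minimum of the LCS array over the
positions between them.) -/
theorem lcp_eq_min_consecutive {α : Type*} [LinearOrder α] (n : ℕ) (w : ℕ → List α)
    (hsorted : ∀ s t : ℕ, s < t → t < n → lexLE (w s) (w t)) :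
    ∀ i j : ℕ, (hij : i < j) → j < n →
      lcp (w i) (w j) =
        (Finset.Ico i j).inf' (by rwa [Finset.nonempty_Ico])
          (fun t => lcp (w t) (w (t + 1))) := by
  intro i j
  induction j with
  | zero => omega
  | succ j ihj =>
    intro hij hjn
    rcases Nat.lt_or_ge i j with hij' | hij'
    · have hjn' : j < n := by omega
      have key : lcp (w i) (w (j + 1)) = min (lcp (w i) (w j)) (lcp (w j) (w (j + 1))) :=
        lcp_min_three _ _ _ (hsorted i j hij' hjn') (hsorted j (j + 1) (by omega) hjn)
      rw [key, ihj hij' hjn']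
      have hsplit : Finset.Ico i (j + 1) = insert j (Finset.Ico i j) := by
        rw [Finset.Ico_insert_right (by omega)]
        ext t; simp
      rw [inf'_congr_set _ _ _ hsplit, Finset.inf'_insert, min_comm]
    · have : i = j := by omega
      subst this
      have hset : Finset.Ico i (i + 1) = {i} := by ext t; simp
      rw [inf'_congr_set _ _ _ hset, Finset.inf'_singleton]
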